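/- Let K be a convex body in ℝ^m, let S be a linear subspace of ℝ^m of dimension d, and let θ₁, θ₂ be unit vectors orthogonal to S with θ₁ + θ₂ ≠ 0; set θ₃ = (θ₁+θ₂)/|θ₁+θ₂|₂. For i = 1,2,3 and r > 0 let h_i(r) = |K ∩ (S + rθ_i)|, the d-dimensional volume of the slice. Then for all r₁, r₂ > 0, with t = r₁/(r₁+r₂) and r₃ = |θ₁+θ₂|₂ / (1/r₁ + 1/r₂), one has h₃(r₃) ≥ h₁(r₁)^{1−t} · h₂(r₂)^{t}. -/

import Mathlib

open MeasureTheory Metric Real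
open scoped Pointwise ENNReal NNReal

noncomputable section

/-- `ℂⁿ`, identified with `ℝ^{2n}` as a real inner product space. -/
abbrev Cn (n : ℕ) := EuclideanSpace ℂ (Fin n)

instance (n : ℕ) : MeasurableSpace (Cn n) := borel _
instance (n : ℕ) : BorelSpace (Cn n) := ⟨rfl⟩
/-- Lebesgue measure on `ℝ^{2n}`, realized as `2n`-dimensional Hausdorff measure. -/
instance (n : ℕ) : MeasureSpace (Cn n) := ⟨μH[2*n]⟩

variable {n : ℕ}

/-- The complex hyperplane through the origin perpendicular to `ξ`. -/
def Hyp (ξ : Cn n) : Set (Cn n) := {z | (inner ℂ ξ z : ℂ) = 0}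

/-- The real inner product on `ℂⁿ ≅ ℝ^{2n}`. -/
def rinner (x y : Cn n) : ℝ := (inner ℂ x y : ℂ).re

/-- An origin symmetric complex star body in `ℝ^{2n}`:  a compact set, star-shaped with
respect to the origin (an interior point), with continuous Minkowski functional (gauge),
origin symmetric and invariant under the rotations `R_θ` (multiplication by unit complex
scalars). -/
structure IsComplexStarBody (K : Set (Cn n)) : Prop where
  compact : IsCompact K
  zero_mem : (0 : Cn n) ∈ interior K
  radial : ∀ x : Cn n, x ∈ K ↔ gauge K x ≤ 1
  cont : Continuous (gauge K)
  symm : ∀ x : Cn n, x ∈ K ↔ -x ∈ K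
  rot : ∀ c : ℂ, ‖c‖ = 1 → ∀ x : Cn n, gauge K (c • x) = gauge K x

/-- An origin symmetric complex convex body in `ℝ^{2n}`. -/
structure IsComplexConvexBody (K : Set (Cn n)) : Prop where
  compact : IsCompact K
  conv : Convex ℝ K
  zero_mem : (0 : Cn n) ∈ interior K
  symm : ∀ x : Cn n, x ∈ K ↔ -x ∈ K
  rot : ∀ c : ℂ, ‖c‖ = 1 → c • K = K

/-- The complex spherical Radon transform:  integration over `S^{2n-1} ∩ H_ξ` with respect
to the `(2n-3)`-dimensional Hausdorff measure. -/
def RadonC (f : Cn n → ℝ) (ξ : Cn n) : ℝ :=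
  ∫ x in sphere (0 : Cn n) 1 ∩ Hyp ξ, f x ∂μH[2*(n:ℝ)-3]

/-- The Fourier transform `φ̂(ξ) = ∫ φ(x) e^{−i(x,ξ)} dx`. -/
def FT (φ : Cn n → ℂ) (ξ : Cn n) : ℂ :=
  ∫ x : Cn n, Complex.exp (-Complex.I * ((rinner x ξ : ℝ) : ℂ)) * φ x

/-- A complex intersection body:  an origin symmetric complex star body `K` such that
`‖·‖_K^{-2} = R_c μ` for some finite rotation-invariant Borel measure `μ` on `S^{2n-1}`. -/
def IsComplexIntersectionBody (K : Set (Cn n)) : Prop :=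
  IsComplexStarBody K ∧
  ∃ μ : Measure (Cn n), IsFiniteMeasure μ ∧ μ ((sphere (0 : Cn n) 1)ᶜ) = 0 ∧
    (∀ c : ℂ, ‖c‖ = 1 → Measure.map (fun x => c • x) μ = μ) ∧
    ∀ f : Cn n → ℝ, ContinuousOn f (sphere (0 : Cn n) 1) →
      (∀ c : ℂ, ‖c‖ = 1 → ∀ x ∈ sphere (0 : Cn n) 1, f (c • x) = f x) →
      (∫ x in sphere (0 : Cn n) 1, gauge K x ^ (-2 : ℝ) * f x ∂μH[2*(n:ℝ)-1])
        = ∫ ξ, RadonC f ξ ∂μ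

/-- A complex ellipsoid:  a linear image of the Euclidean unit ball invariant under the
rotations `R_θ`. -/
def IsComplexEllipsoid (E : Set (Cn n)) : Prop :=
  (∃ T : Cn n ≃ₗ[ℝ] Cn n, E = T '' closedBall (0 : Cn n) 1) ∧
  ∀ c : ℂ, ‖c‖ = 1 → c • E = E

/-- The norm of the complex ellipsoid `E_{a,b}(ξ)`;  here `ξ^⊥ = iξ`. -/
def normE (a b : ℝ) (ξ x : Cn n) : ℝ :=
  Real.sqrt ((rinner x ξ ^ 2 + rinner x (Complex.I • ξ) ^ 2) / a ^ 2
    + (‖x‖ ^ 2 - rinner x ξ ^ 2 - rinner x (Complex.I • ξ) ^ 2) / b ^ 2)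

/-- The volume of the unit Euclidean ball `B_2^m` in `ℝ^m`. -/
def ballVol (m : ℕ) : ℝ := (volume (closedBall (0 : EuclideanSpace ℝ (Fin m)) 1)).toReal

/-- The constant `d_n = |B_2^{2n}|^{(n-1)/n} / |B_2^{2n-2}|`. -/
def dconst (n : ℕ) : ℝ := ballVol (2*n) ^ (((n:ℝ) - 1)/(n:ℝ)) / ballVol (2*n - 2)

/-- The complex intersection body `I_c(K)` of `K`, i.e. the star body whose radial function
is `ρ(ξ) = (|K ∩ H_ξ|/π)^{1/2}`. -/
def Ic (K : Set (Cn n)) : Set (Cn n) :=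
  {0} ∪ {x : Cn n | x ≠ 0 ∧ π * ‖x‖ ^ 2 ≤ (μH[2*(n:ℝ)-2] (K ∩ Hyp (‖x‖⁻¹ • x))).toReal}

section BrunnMinkowskiAux
open Set Module

lemma ennreal_rpow_add_of_nonneg (x : ℝ≥0∞) {y z : ℝ} (hy : 0 ≤ y) (hz : 0 ≤ z) :
    x ^ (y + z) = x ^ y * x ^ z := by
  rcases hy.eq_or_lt with rfl | hy
  · simp
  rcases hz.eq_or_lt with rfl | hz
  · simp
  rcases eq_or_ne x 0 with rfl | hx0
  · rw [ENNReal.zero_rpow_of_pos (by linarith), ENNReal.zero_rpow_of_pos hy,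
      ENNReal.zero_rpow_of_pos hz, zero_mul]
  rcases eq_or_ne x ∞ with rfl | hxt
  · rw [ENNReal.top_rpow_of_pos (by linarith), ENNReal.top_rpow_of_pos hy,
      ENNReal.top_rpow_of_pos hz, ENNReal.top_mul_top]
  exact ENNReal.rpow_add _ _ hx0 hxt

/-- weighted AM-GM in `ℝ≥0∞`. -/
lemma ennreal_geom_mean {t : ℝ} (ht0 : 0 < t) (ht1 : t < 1) (x y : ℝ≥0∞) :
    x ^ (1 - t) * y ^ t ≤ ENNReal.ofReal (1 - t) * x + ENNReal.ofReal t * y := by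
  rcases eq_or_ne x ∞ with rfl | hx
  · apply le_top.trans ?_
    rw [ENNReal.mul_top (by simp [ENNReal.ofReal_eq_zero]; linarith)]
    exact le_add_of_le_of_nonneg le_rfl zero_le |>.trans_eq rfl
  rcases eq_or_ne y ∞ with rfl | hy
  · refine le_trans le_top ?_
    rw [ENNReal.mul_top (by simp [ENNReal.ofReal_eq_zero]; linarith)]
    exact le_add_self
  lift x to NNReal using hx
  lift y to NNReal using hy
  set w1 : NNReal := Real.toNNReal (1 - t) with hw1
  set w2 : NNReal := Real.toNNReal t with hw2
  have hw1c : (w1 : ℝ) = 1 - t := Real.coe_toNNReal _ (by linarith)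
  have hw2c : (w2 : ℝ) = t := Real.coe_toNNReal _ ht0.le
  have hsum : w1 + w2 = 1 := by
    ext; push_cast [hw1c, hw2c]; ring
  have h := NNReal.geom_mean_le_arith_mean2_weighted w1 w2 x y hsum
  have h' : ((x ^ ((w1:ℝ)) * y ^ ((w2:ℝ)) : NNReal) : ℝ≥0∞)
      ≤ ((w1 * x + w2 * y : NNReal) : ℝ≥0∞) := ENNReal.coe_le_coe.2 h
  rw [ENNReal.ofReal, ENNReal.ofReal, ← hw1, ← hw2]
  calc (x:ℝ≥0∞) ^ (1 - t) * (y:ℝ≥0∞) ^ t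
      = ((x ^ ((w1:ℝ)) * y ^ ((w2:ℝ)) : NNReal) : ℝ≥0∞) := by
        rw [hw1c, hw2c]; push_cast
        rw [ENNReal.coe_rpow_of_nonneg _ (by linarith : (0:ℝ) ≤ 1 - t),
          ENNReal.coe_rpow_of_nonneg _ ht0.le]
    _ ≤ ((w1 * x + w2 * y : NNReal) : ℝ≥0∞) := h'
    _ = (w1:ℝ≥0∞) * x + (w2:ℝ≥0∞) * y := by push_cast; rfl

/-- One-dimensional Brunn–Minkowski for nonempty compact sets. -/
lemma bm_dim_one {A B : Set ℝ} (hA : IsCompact A) (hB : IsCompact B)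
    (hAne : A.Nonempty) (hBne : B.Nonempty) : volume A + volume B ≤ volume (A + B) := by
  set a := sSup A with ha
  set b := sInf B with hb
  have haA : a ∈ A := hA.sSup_mem hAne
  have hbB : b ∈ B := hB.sInf_mem hBne
  set U : Set ℝ := (b +ᵥ A) \ {a + b} with hU
  set V : Set ℝ := a +ᵥ B with hV
  have hUsub : U ⊆ A + B := by
    rintro x ⟨hx, -⟩
    obtain ⟨u, hu, rfl⟩ := hx
    simpa [add_comm] using add_mem_add hu hbB
  have hVsub : V ⊆ A + B := by
    rintro x ⟨v, hv, rfl⟩; exact add_mem_add haA hv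
  have hdisj : Disjoint U V := by
    rw [Set.disjoint_left]
    rintro x ⟨hx, hne⟩ ⟨v, hv, rfl⟩
    obtain ⟨u, hu, he⟩ := hx
    have h1 : u ≤ a := le_csSup hA.bddAbove hu
    have h2 : b ≤ v := csInf_le hB.bddBelow hv
    apply hne
    have h3 : b + u = a + v := he
    simp only [mem_singleton_iff, vadd_eq_add]
    linarith
  have hVm : MeasurableSet V := ((hB.vadd a)).measurableSet
  have hvolU : volume U = volume A := by
    rw [hU, measure_diff_null (measure_singleton _), measure_vadd]
  have hvolV : volume V = volume B := measure_vadd _ _ _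
  calc volume A + volume B = volume U + volume V := by rw [hvolU, hvolV]
    _ = volume (U ∪ V) := (measure_union hdisj hVm).symm
    _ ≤ volume (A + B) := measure_mono (union_subset hUsub hVsub)

lemma meas_superadd {t : ℝ} (ht0 : 0 < t) (ht1 : t < 1) {E F T : Set ℝ}
    (hE : MeasurableSet E) (hF : MeasurableSet F) (hEne : E.Nonempty) (hFne : F.Nonempty)
    (hsub : ∀ x ∈ E, ∀ y ∈ F, (1-t)*x + t*y ∈ T) :
    ENNReal.ofReal (1-t) * volume E + ENNReal.ofReal t * volume F ≤ volume T := by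
  obtain ⟨x₀, hx₀⟩ := hEne
  obtain ⟨y₀, hy₀⟩ := hFne
  have key : ∀ K : Set ℝ, K ⊆ E ∧ IsCompact K → ∀ L : Set ℝ, L ⊆ F ∧ IsCompact L →
      ENNReal.ofReal (1-t) * volume K + ENNReal.ofReal t * volume L ≤ volume T := by
    rintro K ⟨hKE, hKc⟩ L ⟨hLF, hLc⟩
    set K' := insert x₀ K with hK'
    set L' := insert y₀ L with hL'
    have hK'E : K' ⊆ E := insert_subset hx₀ hKE
    have hL'F : L' ⊆ F := insert_subset hy₀ hLF
    have hK'c : IsCompact K' := hKc.insert x₀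
    have hL'c : IsCompact L' := hLc.insert y₀
    have hvolK : volume ((1-t) • K') = ENNReal.ofReal (1-t) * volume K' := by
      rw [Measure.addHaar_smul]; simp [abs_of_pos (by linarith : (0:ℝ) < 1 - t)]
    have hvolL : volume (t • L') = ENNReal.ofReal t * volume L' := by
      rw [Measure.addHaar_smul]; simp [abs_of_pos ht0]
    have hsub2 : (1-t) • K' + t • L' ⊆ T := by
      rintro z ⟨p, hp, q, hq, rfl⟩
      obtain ⟨x, hx, rfl⟩ := hp
      obtain ⟨y, hy, rfl⟩ := hq
      exact hsub x (hK'E hx) y (hL'F hy)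
    calc ENNReal.ofReal (1-t) * volume K + ENNReal.ofReal t * volume L
        ≤ ENNReal.ofReal (1-t) * volume K' + ENNReal.ofReal t * volume L' := by
          gcongr <;> [exact subset_insert _ _; exact subset_insert _ _]
      _ = volume ((1-t) • K') + volume (t • L') := by rw [hvolK, hvolL]
      _ ≤ volume ((1-t) • K' + t • L') :=
          bm_dim_one (hK'c.smul _) (hL'c.smul _)
            (Nonempty.smul_set ⟨x₀, mem_insert _ _⟩) (Nonempty.smul_set ⟨y₀, mem_insert _ _⟩)
      _ ≤ volume T := measure_mono hsub2
  have hE' : ENNReal.ofReal (1-t) * volume E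
      = ⨆ (K : Set ℝ) (_ : K ⊆ E ∧ IsCompact K), ENNReal.ofReal (1-t) * volume K := by
    rw [hE.measure_eq_iSup_isCompact volume]
    simp_rw [ENNReal.mul_iSup, iSup_and]
  have hF' : ENNReal.ofReal t * volume F
      = ⨆ (L : Set ℝ) (_ : L ⊆ F ∧ IsCompact L), ENNReal.ofReal t * volume L := by
    rw [hF.measure_eq_iSup_isCompact volume]
    simp_rw [ENNReal.mul_iSup, iSup_and]
  rw [hE', hF']
  exact ENNReal.biSup_add_biSup_le' ⟨∅, empty_subset _, isCompact_empty⟩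
    ⟨∅, empty_subset _, isCompact_empty⟩ key

/-- Layer cake for finite-valued `ℝ≥0∞` functions. -/
lemma layercake_ennreal {F : ℝ → ℝ≥0∞} (hF : Measurable F) (hFfin : ∀ x, F x ≠ ∞) :
    ∫⁻ x, F x = ∫⁻ u in Ioi (0:ℝ), volume {x | ENNReal.ofReal u < F x} := by
  have h1 : ∫⁻ x, F x = ∫⁻ x, ENNReal.ofReal ((F x).toReal) :=
    lintegral_congr fun x => (ENNReal.ofReal_toReal (hFfin x)).symm
  rw [h1, lintegral_eq_lintegral_meas_lt volume
    (Filter.Eventually.of_forall fun x => ENNReal.toReal_nonneg) hF.ennreal_toReal.aemeasurable]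
  refine setLIntegral_congr_fun measurableSet_Ioi ?_
  intro u hu
  beta_reduce
  congr 1
  ext x
  simp only [mem_setOf_eq]
  exact (ENNReal.ofReal_lt_iff_lt_toReal (le_of_lt hu) (hFfin x)).symm

/-- 1-d Prékopa–Leindler, normalized version. -/
lemma pl_dim_one {t : ℝ} (ht0 : 0 < t) (ht1 : t < 1) {f g h : ℝ → ℝ≥0∞}
    (hf : Measurable f) (hg : Measurable g) (hh : Measurable h)
    (hf1 : ∀ x, f x ≤ 1) (hg1 : ∀ y, g y ≤ 1) (hhfin : ∀ z, h z ≠ ∞)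
    (hfs : 1 ≤ ⨆ x, f x) (hgs : 1 ≤ ⨆ y, g y)
    (hyp : ∀ x y, f x ≠ 0 → g y ≠ 0 → f x ^ (1-t) * g y ^ t ≤ h ((1-t)*x + t*y)) :
    (∫⁻ x, f x) ^ (1-t) * (∫⁻ y, g y) ^ t ≤ ∫⁻ z, h z := by
  set μf : ℝ → ℝ≥0∞ := fun u => volume {x | ENNReal.ofReal u < f x} with hμf
  set μg : ℝ → ℝ≥0∞ := fun u => volume {y | ENNReal.ofReal u < g y} with hμg
  set μh : ℝ → ℝ≥0∞ := fun u => volume {z | ENNReal.ofReal u < h z} with hμh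
  have hμfa : Antitone μf := fun u v huv =>
    measure_mono fun x hx => lt_of_le_of_lt (ENNReal.ofReal_le_ofReal huv) hx
  have hμga : Antitone μg := fun u v huv =>
    measure_mono fun x hx => lt_of_le_of_lt (ENNReal.ofReal_le_ofReal huv) hx
  have hμha : Antitone μh := fun u v huv =>
    measure_mono fun x hx => lt_of_le_of_lt (ENNReal.ofReal_le_ofReal huv) hx
  -- key pointwise estimate
  have key : ∀ u ∈ Ioo (0:ℝ) 1,
      ENNReal.ofReal (1-t) * μf u + ENNReal.ofReal t * μg u ≤ μh u := by
    rintro u ⟨hu0, hu1⟩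
    have hu0' : (0:ℝ≥0∞) < ENNReal.ofReal u := ENNReal.ofReal_pos.2 hu0
    have hune : {x | ENNReal.ofReal u < f x}.Nonempty := by
      have : ENNReal.ofReal u < ⨆ x, f x := lt_of_lt_of_le (ENNReal.ofReal_lt_one.2 hu1) hfs
      obtain ⟨x, hx⟩ := lt_iSup_iff.1 this
      exact ⟨x, hx⟩
    have hgne : {y | ENNReal.ofReal u < g y}.Nonempty := by
      have : ENNReal.ofReal u < ⨆ y, g y := lt_of_lt_of_le (ENNReal.ofReal_lt_one.2 hu1) hgs
      obtain ⟨y, hy⟩ := lt_iSup_iff.1 this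
      exact ⟨y, hy⟩
    refine meas_superadd ht0 ht1 (hf measurableSet_Ioi) (hg measurableSet_Ioi) hune hgne ?_
    intro x hx y hy
    simp only [mem_setOf_eq] at hx hy ⊢
    have hfx0 : f x ≠ 0 := fun h0 => by simp [h0] at hx
    have hgy0 : g y ≠ 0 := fun h0 => by simp [h0] at hy
    have hut0 : ENNReal.ofReal u ^ t ≠ 0 := (ENNReal.rpow_pos hu0' ENNReal.ofReal_ne_top).ne'
    have hutfin : ENNReal.ofReal u ^ t ≠ ∞ := ENNReal.rpow_ne_top_of_nonneg ht0.le ENNReal.ofReal_ne_top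
    calc ENNReal.ofReal u = ENNReal.ofReal u ^ (1-t) * ENNReal.ofReal u ^ t := by
          rw [← ennreal_rpow_add_of_nonneg _ (by linarith) ht0.le]
          norm_num
      _ < f x ^ (1-t) * ENNReal.ofReal u ^ t := by
          exact (ENNReal.mul_lt_mul_left hut0 hutfin)
            (ENNReal.rpow_lt_rpow hx (by linarith))
      _ ≤ f x ^ (1-t) * g y ^ t := mul_le_mul_right (ENNReal.rpow_le_rpow hy.le ht0.le) _
      _ ≤ h ((1-t)*x + t*y) := hyp x y hfx0 hgy0
  -- layer cake identities
  have hsplit : ∀ (F : ℝ → ℝ≥0∞), Measurable F → (∀ x, F x ≤ 1) →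
      ∫⁻ x, F x = ∫⁻ u in Ioo (0:ℝ) 1, volume {x | ENNReal.ofReal u < F x} := by
    intro F hFm hF1
    rw [layercake_ennreal hFm (fun x => (lt_of_le_of_lt (hF1 x) ENNReal.one_lt_top).ne),
      ← Ioo_union_Ici_eq_Ioi (zero_lt_one (α := ℝ)),
      lintegral_union measurableSet_Ici
        (disjoint_left.2 fun u hu hu' => absurd hu.2 (not_lt.2 hu'))]
    have : ∫⁻ u in Ici (1:ℝ), volume {x | ENNReal.ofReal u < F x} = 0 := by
      rw [← lintegral_zero (μ := volume.restrict (Ici (1:ℝ)))]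
      refine setLIntegral_congr_fun measurableSet_Ici (fun u hu => ?_)
      have : {x | ENNReal.ofReal u < F x} = ∅ := by
        refine eq_empty_iff_forall_notMem.2 fun x hx => ?_
        exact absurd (lt_of_le_of_lt (le_trans (hF1 x) (ENNReal.one_le_ofReal.2 hu)) hx)
          (lt_irrefl _)
      rw [this, measure_empty]
    rw [this, add_zero]
  have hIf : ∫⁻ x, f x = ∫⁻ u in Ioo (0:ℝ) 1, μf u := hsplit f hf hf1
  have hIg : ∫⁻ y, g y = ∫⁻ u in Ioo (0:ℝ) 1, μg u := hsplit g hg hg1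
  have hIh : ∫⁻ u in Ioo (0:ℝ) 1, μh u ≤ ∫⁻ z, h z := by
    rw [layercake_ennreal hh hhfin]
    exact lintegral_mono_set (Ioo_subset_Ioi_self)
  calc (∫⁻ x, f x) ^ (1-t) * (∫⁻ y, g y) ^ t
      ≤ ENNReal.ofReal (1-t) * (∫⁻ x, f x) + ENNReal.ofReal t * (∫⁻ y, g y) :=
        ennreal_geom_mean ht0 ht1 _ _
    _ = ∫⁻ u in Ioo (0:ℝ) 1, (ENNReal.ofReal (1-t) * μf u + ENNReal.ofReal t * μg u) := by
        rw [hIf, hIg, lintegral_add_left (hμfa.measurable.const_mul _),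
          lintegral_const_mul _ hμfa.measurable, lintegral_const_mul _ hμga.measurable]
    _ ≤ ∫⁻ u in Ioo (0:ℝ) 1, μh u :=
        setLIntegral_mono hμha.measurable key
    _ ≤ ∫⁻ z, h z := hIh

/-- 1-d Prékopa–Leindler, unnormalized. -/
lemma pl_dim_one' {t : ℝ} (ht0 : 0 < t) (ht1 : t < 1) {f g h : ℝ → ℝ≥0∞}
    (hf : Measurable f) (hg : Measurable g) (hh : Measurable h)
    (hffin : (⨆ x, f x) ≠ ∞) (hgfin : (⨆ y, g y) ≠ ∞) (hhfin : ∀ z, h z ≠ ∞)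
    (hyp : ∀ x y, f x ≠ 0 → g y ≠ 0 → f x ^ (1-t) * g y ^ t ≤ h ((1-t)*x + t*y)) :
    (∫⁻ x, f x) ^ (1-t) * (∫⁻ y, g y) ^ t ≤ ∫⁻ z, h z := by
  rcases eq_or_ne (⨆ x, f x) 0 with hMf0 | hMf0
  · have : ∀ x, f x = 0 := fun x => le_antisymm (hMf0 ▸ le_iSup f x) zero_le
    have hif : ∫⁻ x, f x = 0 := by simp [this]
    rw [hif, ENNReal.zero_rpow_of_pos (by linarith), zero_mul]
    exact zero_le
  rcases eq_or_ne (⨆ y, g y) 0 with hMg0 | hMg0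
  · have : ∀ y, g y = 0 := fun y => le_antisymm (hMg0 ▸ le_iSup g y) zero_le
    have hig : ∫⁻ y, g y = 0 := by simp [this]
    rw [hig, ENNReal.zero_rpow_of_pos ht0, mul_zero]
    exact zero_le
  set Mf := ⨆ x, f x with hMf
  set Mg := ⨆ y, g y with hMg
  have hMfi0 : Mf⁻¹ ≠ 0 := ENNReal.inv_ne_zero.2 hffin
  have hMfit : Mf⁻¹ ≠ ∞ := ENNReal.inv_ne_top.2 hMf0
  have hMgi0 : Mg⁻¹ ≠ 0 := ENNReal.inv_ne_zero.2 hgfin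
  have hMgit : Mg⁻¹ ≠ ∞ := ENNReal.inv_ne_top.2 hMg0
  set c : ℝ≥0∞ := Mf⁻¹ ^ (1-t) * Mg⁻¹ ^ t with hc
  have hc0 : c ≠ 0 := mul_ne_zero
    (ENNReal.rpow_pos (ENNReal.inv_pos.2 hffin) hMfit).ne'
    (ENNReal.rpow_pos (ENNReal.inv_pos.2 hgfin) hMgit).ne'
  have hcfin : c ≠ ∞ := ENNReal.mul_ne_top
    (ENNReal.rpow_ne_top_of_nonneg (by linarith) hMfit)
    (ENNReal.rpow_ne_top_of_nonneg ht0.le hMgit)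
  set f1 : ℝ → ℝ≥0∞ := fun x => f x * Mf⁻¹ with hf1def
  set g1 : ℝ → ℝ≥0∞ := fun y => g y * Mg⁻¹ with hg1def
  set h1 : ℝ → ℝ≥0∞ := fun z => h z * c with hh1def
  have key := pl_dim_one (f := f1) (g := g1) (h := h1) ht0 ht1
    (hf.mul_const _) (hg.mul_const _) (hh.mul_const _)
    (fun x => by
      show f x * Mf⁻¹ ≤ 1
      calc f x * Mf⁻¹ ≤ Mf * Mf⁻¹ := mul_le_mul_left (le_iSup f x) _
        _ = 1 := ENNReal.mul_inv_cancel hMf0 hffin)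
    (fun y => by
      show g y * Mg⁻¹ ≤ 1
      calc g y * Mg⁻¹ ≤ Mg * Mg⁻¹ := mul_le_mul_left (le_iSup g y) _
        _ = 1 := ENNReal.mul_inv_cancel hMg0 hgfin)
    (fun z => ENNReal.mul_ne_top (hhfin z) hcfin)
    (by show 1 ≤ ⨆ x, f x * Mf⁻¹
        have h2 : (⨆ x, f x * Mf⁻¹) = Mf * Mf⁻¹ := by rw [← ENNReal.iSup_mul]
        rw [h2, ENNReal.mul_inv_cancel hMf0 hffin])
    (by show 1 ≤ ⨆ y, g y * Mg⁻¹
        have h2 : (⨆ y, g y * Mg⁻¹) = Mg * Mg⁻¹ := by rw [← ENNReal.iSup_mul]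
        rw [h2, ENNReal.mul_inv_cancel hMg0 hgfin])
    (by
      intro x y hx0 hy0
      have hx0' : f x ≠ 0 := fun hz => hx0 (by show f x * Mf⁻¹ = 0; rw [hz, zero_mul])
      have hy0' : g y ≠ 0 := fun hz => hy0 (by show g y * Mg⁻¹ = 0; rw [hz, zero_mul])
      show (f x * Mf⁻¹) ^ (1-t) * (g y * Mg⁻¹) ^ t ≤ h ((1-t)*x + t*y) * c
      rw [ENNReal.mul_rpow_of_nonneg _ _ (by linarith : (0:ℝ) ≤ 1 - t),
        ENNReal.mul_rpow_of_nonneg _ _ ht0.le]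
      calc f x ^ (1-t) * Mf⁻¹ ^ (1-t) * (g y ^ t * Mg⁻¹ ^ t)
          = f x ^ (1-t) * g y ^ t * c := by rw [hc]; ring
        _ ≤ h ((1-t)*x + t*y) * c := mul_le_mul_left (hyp x y hx0' hy0') _)
  have hif1 : ∫⁻ x, f1 x = (∫⁻ x, f x) * Mf⁻¹ := lintegral_mul_const _ hf
  have hig1 : ∫⁻ y, g1 y = (∫⁻ y, g y) * Mg⁻¹ := lintegral_mul_const _ hg
  have hih1 : ∫⁻ z, h1 z = (∫⁻ z, h z) * c := lintegral_mul_const _ hh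
  rw [hif1, hig1, hih1] at key
  rw [ENNReal.mul_rpow_of_nonneg _ _ (by linarith : (0:ℝ) ≤ 1 - t),
    ENNReal.mul_rpow_of_nonneg _ _ ht0.le] at key
  have key2 : (∫⁻ x, f x) ^ (1-t) * (∫⁻ y, g y) ^ t * c ≤ (∫⁻ z, h z) * c := by
    calc (∫⁻ x, f x) ^ (1-t) * (∫⁻ y, g y) ^ t * c
        = (∫⁻ x, f x) ^ (1-t) * Mf⁻¹ ^ (1-t) * ((∫⁻ y, g y) ^ t * Mg⁻¹ ^ t) := by
          rw [hc]; ring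
      _ ≤ (∫⁻ z, h z) * c := key
  exact (ENNReal.mul_le_mul_iff_left hc0 hcfin).1 key2

/-- combination of sets as an image2 -/
lemma comb_eq_image2 {α : Type*} [AddCommMonoid α] [Module ℝ α] (c d : ℝ) (A B : Set α) :
    c • A + d • B = Set.image2 (fun x y => c • x + d • y) A B := by
  ext z
  constructor
  · rintro ⟨p, hp, q, hq, rfl⟩
    obtain ⟨a, ha, rfl⟩ := hp
    obtain ⟨b, hb, rfl⟩ := hq
    exact mem_image2_of_mem ha hb
  · rintro ⟨a, ha, b, hb, rfl⟩
    exact ⟨c • a, smul_mem_smul_set ha, d • b, smul_mem_smul_set hb, rfl⟩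

/-- Multiplicative Brunn–Minkowski in `Fin n → ℝ`. -/
lemma bm_pi : ∀ (n : ℕ) {t : ℝ}, 0 < t → t < 1 → ∀ {A B : Set (Fin n → ℝ)},
    IsCompact A → Convex ℝ A → A.Nonempty → IsCompact B → Convex ℝ B → B.Nonempty →
    volume A ^ (1-t) * volume B ^ t ≤ volume ((1-t) • A + t • B) := by
  intro n
  induction n with
  | zero =>
    intro t ht0 ht1 A B hAc hAconv hAne hBc hBconv hBne
    have h1 : volume (univ : Set (Fin 0 → ℝ)) = 1 := by
      rw [volume_pi, Measure.pi_univ]; simp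
    have hA : A = univ := hAne.eq_univ
    have hB : B = univ := hBne.eq_univ
    have hC : (1-t) • A + t • B = univ :=
      Nonempty.eq_univ (by
        rw [hA, hB]
        exact Set.add_nonempty.2 ⟨(Set.Nonempty.smul_set (univ_nonempty)),
          (Set.Nonempty.smul_set (univ_nonempty))⟩)
    rw [hC, hA, hB, h1]
    simp
  | succ n IH =>
    intro t ht0 ht1 A B hAc hAconv hAne hBc hBconv hBne
    set e := MeasurableEquiv.piFinSuccAbove (fun _ : Fin (n+1) => ℝ) 0 with he
    have hmp : MeasurePreserving e volume volume :=
      volume_preserving_piFinSuccAbove (fun _ : Fin (n+1) => ℝ) 0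
    have hecont : Continuous e := by
      show Continuous fun f : Fin (n+1) → ℝ => ((f 0 : ℝ), fun j : Fin n => f (Fin.succAbove 0 j))
      fun_prop
    have hlin : ∀ (c d : ℝ) (x y : Fin (n+1) → ℝ), e (c • x + d • y) = c • e x + d • e y :=
      fun c d x y => rfl
    have hmeas : ∀ X : Set (Fin (n+1) → ℝ), MeasurableSet X → volume (e '' X) = volume X := by
      intro X hX
      rw [MeasurableEquiv.image_eq_preimage_symm]
      exact MeasurePreserving.measure_preimage (MeasurePreserving.symm _ hmp) hX.nullMeasurableSet
    set A' := e '' A with hA'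
    set B' := e '' B with hB'
    set C' := (1-t) • A' + t • B' with hC'
    have hA'c : IsCompact A' := hAc.image hecont
    have hB'c : IsCompact B' := hBc.image hecont
    have hC'c : IsCompact C' := ((hA'c.smul _).add (hB'c.smul _))
    have hA'conv : Convex ℝ A' := by
      rintro p ⟨x, hx, rfl⟩ q ⟨y, hy, rfl⟩ a b ha hb hab
      exact ⟨a • x + b • y, hAconv hx hy ha hb hab, (hlin a b x y)⟩
    have hB'conv : Convex ℝ B' := by
      rintro p ⟨x, hx, rfl⟩ q ⟨y, hy, rfl⟩ a b ha hb hab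
      exact ⟨a • x + b • y, hBconv hx hy ha hb hab, (hlin a b x y)⟩
    have himg : e '' ((1-t) • A + t • B) = C' := by
      rw [comb_eq_image2, hC', comb_eq_image2, Set.image_image2]
      rw [hA', hB', Set.image2_image_left, Set.image2_image_right]
      exact Set.image2_congr fun x _ y _ => hlin _ _ x y
    -- slice functions
    set SA : ℝ → Set (Fin n → ℝ) := fun a => Prod.mk a ⁻¹' A' with hSA
    set SB : ℝ → Set (Fin n → ℝ) := fun a => Prod.mk a ⁻¹' B' with hSB
    set SC : ℝ → Set (Fin n → ℝ) := fun a => Prod.mk a ⁻¹' C' with hSC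
    set f : ℝ → ℝ≥0∞ := fun a => volume (SA a) with hfdef
    set g : ℝ → ℝ≥0∞ := fun a => volume (SB a) with hgdef
    set h : ℝ → ℝ≥0∞ := fun a => volume (SC a) with hhdef
    have hslice_c : ∀ (X : Set (ℝ × (Fin n → ℝ))), IsCompact X → ∀ a,
        IsCompact (Prod.mk a ⁻¹' X) := by
      intro X hX a
      refine (hX.image continuous_snd).of_isClosed_subset
        (hX.isClosed.preimage (Continuous.prodMk_right a)) ?_
      intro y hy
      exact ⟨(a, y), hy, rfl⟩
    have hslice_conv : ∀ (X : Set (ℝ × (Fin n → ℝ))), Convex ℝ X → ∀ a,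
        Convex ℝ (Prod.mk a ⁻¹' X) := by
      intro X hX a y₁ hy₁ y₂ hy₂ c d hc hd hcd
      have h2 := hX hy₁ hy₂ hc hd hcd
      have h3 : c • ((a, y₁) : ℝ × (Fin n → ℝ)) + d • (a, y₂) = (a, c • y₁ + d • y₂) := by
        rw [Prod.smul_mk, Prod.smul_mk, Prod.mk_add_mk]
        congr 1
        simp only [smul_eq_mul]
        rw [← add_mul, hcd, one_mul]
      rwa [h3] at h2
    have hfm : Measurable f := measurable_measure_prodMk_left hA'c.measurableSet
    have hgm : Measurable g := measurable_measure_prodMk_left hB'c.measurableSet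
    have hhm : Measurable h := measurable_measure_prodMk_left hC'c.measurableSet
    have hbound : ∀ (X : Set (ℝ × (Fin n → ℝ))), IsCompact X → ∀ a,
        volume (Prod.mk a ⁻¹' X) ≤ volume (Prod.snd '' X) := by
      intro X hX a
      exact measure_mono fun y hy => ⟨(a, y), hy, rfl⟩
    have hffin : (⨆ a, f a) ≠ ∞ := by
      refine ne_top_of_le_ne_top ((hA'c.image continuous_snd).measure_lt_top (μ := volume)).ne ?_
      exact iSup_le fun a => hbound _ hA'c a
    have hgfin : (⨆ a, g a) ≠ ∞ := by
      refine ne_top_of_le_ne_top ((hB'c.image continuous_snd).measure_lt_top (μ := volume)).ne ?_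
      exact iSup_le fun a => hbound _ hB'c a
    have hhfin : ∀ a, h a ≠ ∞ :=
      fun a => ne_top_of_le_ne_top ((hC'c.image continuous_snd).measure_lt_top (μ := volume)).ne
        (hbound _ hC'c a)
    have hyp : ∀ x y, f x ≠ 0 → g y ≠ 0 → f x ^ (1-t) * g y ^ t ≤ h ((1-t)*x + t*y) := by
      intro a b hfa hgb
      have hane : (SA a).Nonempty := nonempty_of_measure_ne_zero hfa
      have hbne : (SB b).Nonempty := nonempty_of_measure_ne_zero hgb
      refine le_trans (IH ht0 ht1 (hslice_c _ hA'c a) (hslice_conv _ hA'conv a) hane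
        (hslice_c _ hB'c b) (hslice_conv _ hB'conv b) hbne) (measure_mono ?_)
      rintro z ⟨p, hp, q, hq, rfl⟩
      obtain ⟨ya, hya, rfl⟩ := hp
      obtain ⟨yb, hyb, rfl⟩ := hq
      show ((1-t)*a + t*b, (1-t) • ya + t • yb) ∈ C'
      have : ((1-t)*a + t*b, (1-t) • ya + t • yb)
          = (1-t) • ((a, ya) : ℝ × (Fin n → ℝ)) + t • (b, yb) := by
        rw [Prod.smul_mk, Prod.smul_mk, Prod.mk_add_mk]
        simp [smul_eq_mul]
      rw [this]
      exact ⟨_, smul_mem_smul_set hya, _, smul_mem_smul_set hyb, rfl⟩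
    have hvolA : volume A = ∫⁻ a, f a := by
      rw [← hmeas A hAc.measurableSet, ← hA']
      rw [Measure.volume_eq_prod, Measure.prod_apply hA'c.measurableSet]
    have hvolB : volume B = ∫⁻ a, g a := by
      rw [← hmeas B hBc.measurableSet, ← hB']
      rw [Measure.volume_eq_prod, Measure.prod_apply hB'c.measurableSet]
    have hvolC : volume ((1-t) • A + t • B) = ∫⁻ a, h a := by
      rw [← hmeas _ (((hAc.smul ((1:ℝ)-t)).add (hBc.smul t)).measurableSet), himg]
      rw [Measure.volume_eq_prod, Measure.prod_apply hC'c.measurableSet]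
    rw [hvolA, hvolB, hvolC]
    exact pl_dim_one' ht0 ht1 hfm hgm hhm hffin hgfin hhfin hyp

/-- Multiplicative Brunn–Minkowski for an additive Haar measure on a finite-dimensional
real normed space. -/
lemma bm_general {E : Type*} [NormedAddCommGroup E] [NormedSpace ℝ E] [FiniteDimensional ℝ E]
    [MeasurableSpace E] [BorelSpace E] (μ : Measure E) [μ.IsAddHaarMeasure]
    {t : ℝ} (ht0 : 0 < t) (ht1 : t < 1) {A B : Set E}
    (hAc : IsCompact A) (hAconv : Convex ℝ A) (hAne : A.Nonempty)
    (hBc : IsCompact B) (hBconv : Convex ℝ B) (hBne : B.Nonempty) :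
    μ A ^ (1-t) * μ B ^ t ≤ μ ((1-t) • A + t • B) := by
  set n := finrank ℝ E with hn
  have hEq : finrank ℝ E = finrank ℝ (Fin n → ℝ) := by simp [hn]
  set L : E ≃L[ℝ] (Fin n → ℝ) := ContinuousLinearEquiv.ofFinrankEq hEq with hL
  set ν : Measure (Fin n → ℝ) := Measure.map L μ with hν
  have : ν.IsAddHaarMeasure := L.isAddHaarMeasure_map μ
  have huniq : ν = Measure.addHaarScalarFactor ν volume • volume :=
    Measure.isAddLeftInvariant_eq_smul ν volume
  set k : ℝ≥0∞ := (Measure.addHaarScalarFactor ν volume : ℝ≥0∞) with hk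
  have hmap : ∀ X : Set E, MeasurableSet (L '' X) → μ X = k * volume (L '' X) := by
    intro X hX
    have h1 : ν (L '' X) = μ X := by
      rw [hν, Measure.map_apply L.continuous.measurable hX]
      rw [Set.preimage_image_eq _ L.injective]
    rw [← h1, huniq, Measure.smul_apply, ENNReal.smul_def, hk, smul_eq_mul]
  have hlin : ∀ (c d : ℝ) (x y : E), L (c • x + d • y) = c • L x + d • L y := by
    intro c d x y; simp
  have himg : L '' ((1-t) • A + t • B) = (1-t) • (L '' A) + t • (L '' B) := by
    rw [comb_eq_image2, comb_eq_image2, Set.image_image2, Set.image2_image_left,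
      Set.image2_image_right]
    exact Set.image2_congr fun x _ y _ => hlin _ _ x y
  have hA'c : IsCompact (L '' A) := hAc.image L.continuous
  have hB'c : IsCompact (L '' B) := hBc.image L.continuous
  have hA'conv : Convex ℝ (L '' A) := hAconv.linear_image (L : E →ₗ[ℝ] (Fin n → ℝ))
  have hB'conv : Convex ℝ (L '' B) := hBconv.linear_image (L : E →ₗ[ℝ] (Fin n → ℝ))
  have hCc : IsCompact ((1-t) • A + t • B) := (hAc.smul _).add (hBc.smul _)
  rw [hmap A (hAc.image L.continuous).measurableSet, hmap B (hBc.image L.continuous).measurableSet,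
    hmap _ (hCc.image L.continuous).measurableSet, himg]
  rw [ENNReal.mul_rpow_of_nonneg _ _ (by linarith : (0:ℝ) ≤ 1 - t),
    ENNReal.mul_rpow_of_nonneg _ _ ht0.le]
  calc k ^ (1-t) * volume (L '' A) ^ (1-t) * (k ^ t * volume (L '' B) ^ t)
      = (k ^ (1-t) * k ^ t) * (volume (L '' A) ^ (1-t) * volume (L '' B) ^ t) := by ring
    _ = k * (volume (L '' A) ^ (1-t) * volume (L '' B) ^ t) := by
        rw [← ennreal_rpow_add_of_nonneg _ (by linarith : (0:ℝ) ≤ 1 - t) ht0.le]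
        norm_num
    _ ≤ k * volume ((1-t) • (L '' A) + t • (L '' B)) :=
        mul_le_mul_right (bm_pi n ht0 ht1 hA'c hA'conv (hAne.image _) hB'c hB'conv
          (hBne.image _)) _

end BrunnMinkowskiAux

open Set Module in
/-- Log-concavity of parallel slices of a convex body (Brunn–Minkowski):
`h₃(r₃) ≥ h₁(r₁)^{1−t} h₂(r₂)^t`. -/
theorem stmt15 (m : ℕ) (K : Set (EuclideanSpace ℝ (Fin m)))
    (hKc : IsCompact K) (hKconv : Convex ℝ K) (hKint : (interior K).Nonempty)
    (S : Submodule ℝ (EuclideanSpace ℝ (Fin m))) (d : ℕ) (hd : d = Module.finrank ℝ S)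
    (θ₁ θ₂ : EuclideanSpace ℝ (Fin m)) (h1 : ‖θ₁‖ = 1) (h2 : ‖θ₂‖ = 1)
    (ho1 : ∀ s ∈ S, (inner ℝ θ₁ s : ℝ) = 0) (ho2 : ∀ s ∈ S, (inner ℝ θ₂ s : ℝ) = 0)
    (hsum : θ₁ + θ₂ ≠ 0)
    (r₁ r₂ : ℝ) (hr1 : 0 < r₁) (hr2 : 0 < r₂) :
    (μH[(d:ℝ)] (K ∩ ((r₁ • θ₁) +ᵥ (S : Set (EuclideanSpace ℝ (Fin m)))))).toReal
        ^ (1 - r₁/(r₁+r₂))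
      * (μH[(d:ℝ)] (K ∩ ((r₂ • θ₂) +ᵥ (S : Set (EuclideanSpace ℝ (Fin m)))))).toReal
        ^ (r₁/(r₁+r₂))
      ≤ (μH[(d:ℝ)] (K ∩ (((‖θ₁ + θ₂‖ / (1/r₁ + 1/r₂)) • (‖θ₁ + θ₂‖⁻¹ • (θ₁ + θ₂)))
          +ᵥ (S : Set (EuclideanSpace ℝ (Fin m)))))).toReal := by
  subst hd
  set t := r₁ / (r₁ + r₂) with ht
  have hrs : (0:ℝ) < r₁ + r₂ := by linarith
  have ht0 : 0 < t := div_pos hr1 hrs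
  have ht1 : t < 1 := (div_lt_one hrs).2 (by linarith)
  have hnz : ‖θ₁ + θ₂‖ ≠ 0 := norm_ne_zero_iff.2 hsum
  set v₁ : EuclideanSpace ℝ (Fin m) := r₁ • θ₁ with hv₁
  set v₂ : EuclideanSpace ℝ (Fin m) := r₂ • θ₂ with hv₂
  set v₃ : EuclideanSpace ℝ (Fin m) := (‖θ₁ + θ₂‖ / (1/r₁ + 1/r₂)) • (‖θ₁ + θ₂‖⁻¹ • (θ₁ + θ₂)) with hv₃def
  have hv₃ : v₃ = (1-t) • v₁ + t • v₂ := by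
    have hc : ‖θ₁ + θ₂‖ / (1/r₁ + 1/r₂) * ‖θ₁ + θ₂‖⁻¹ = r₁ * r₂ / (r₁ + r₂) := by
      field_simp
      ring
    have e1 : (1-t) * r₁ = r₁ * r₂ / (r₁ + r₂) := by rw [ht]; field_simp; ring
    have e2 : t * r₂ = r₁ * r₂ / (r₁ + r₂) := by rw [ht]; field_simp
    rw [hv₃def, hv₁, hv₂, smul_smul, smul_smul, smul_smul, hc, e1, e2, smul_add]
  -- the slice sets, translated into the subspace
  set F : EuclideanSpace ℝ (Fin m) → Set ↥S := fun v => Subtype.val ⁻¹' ((-v) +ᵥ (K ∩ (v +ᵥ (S : Set (EuclideanSpace ℝ (Fin m)))))) with hF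
  have hcast : (0:ℝ) ≤ ((finrank ℝ ↥S : ℕ) : ℝ) := Nat.cast_nonneg _
  have hSclosed : IsClosed (S : Set (EuclideanSpace ℝ (Fin m))) := Submodule.closed_of_finiteDimensional S
  have hKvc : ∀ v : EuclideanSpace ℝ (Fin m), IsCompact (K ∩ (v +ᵥ (S : Set (EuclideanSpace ℝ (Fin m))))) :=
    fun v => hKc.inter_right (hSclosed.vadd v)
  have hKvconv : ∀ v : EuclideanSpace ℝ (Fin m), Convex ℝ (K ∩ (v +ᵥ (S : Set (EuclideanSpace ℝ (Fin m))))) :=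
    fun v => hKconv.inter ((S.convex).vadd v)
  have hDsub : ∀ v : EuclideanSpace ℝ (Fin m), ((-v) +ᵥ (K ∩ (v +ᵥ (S : Set (EuclideanSpace ℝ (Fin m)))))) ⊆ (S : Set (EuclideanSpace ℝ (Fin m))) := by
    rintro v x ⟨y, ⟨hyK, s, hs, rfl⟩, rfl⟩
    show -v +ᵥ (v +ᵥ s) ∈ (S : Set (EuclideanSpace ℝ (Fin m)))
    simpa [vadd_eq_add, neg_add_cancel_left] using hs
  have hDimg : ∀ v : EuclideanSpace ℝ (Fin m),
      Subtype.val '' (F v) = (-v) +ᵥ (K ∩ (v +ᵥ (S : Set (EuclideanSpace ℝ (Fin m))))) := by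
    intro v
    rw [hF]
    rw [Set.image_preimage_eq_inter_range, Subtype.range_val]
    exact inter_eq_self_of_subset_left (hDsub v)
  have hmeas_eq : ∀ v : EuclideanSpace ℝ (Fin m),
      μH[((finrank ℝ ↥S : ℕ) : ℝ)] (F v) = μH[((finrank ℝ ↥S : ℕ) : ℝ)] (K ∩ (v +ᵥ (S : Set (EuclideanSpace ℝ (Fin m))))) := by
    intro v
    have hiso : Isometry (fun x : EuclideanSpace ℝ (Fin m) => -v + x) :=
      Isometry.of_dist_eq fun a b => dist_add_left _ _ _
    calc μH[((finrank ℝ ↥S : ℕ) : ℝ)] (F v)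
        = μH[((finrank ℝ ↥S : ℕ) : ℝ)] (Subtype.val '' (F v)) :=
          (isometry_subtype_coe.hausdorffMeasure_image (Or.inl hcast) _).symm
      _ = μH[((finrank ℝ ↥S : ℕ) : ℝ)] ((-v) +ᵥ (K ∩ (v +ᵥ (S : Set (EuclideanSpace ℝ (Fin m)))))) := by rw [hDimg]
      _ = μH[((finrank ℝ ↥S : ℕ) : ℝ)] (K ∩ (v +ᵥ (S : Set (EuclideanSpace ℝ (Fin m))))) := by
          have h2 : (fun x : EuclideanSpace ℝ (Fin m) => -v + x) '' (K ∩ (v +ᵥ (S : Set (EuclideanSpace ℝ (Fin m)))))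
              = (-v) +ᵥ (K ∩ (v +ᵥ (S : Set (EuclideanSpace ℝ (Fin m))))) := rfl
          rw [← h2, hiso.hausdorffMeasure_image (Or.inl hcast)]
  have hFc : ∀ v : EuclideanSpace ℝ (Fin m), IsCompact (F v) := by
    intro v
    have hiso : Isometry ((↑) : ↥S → EuclideanSpace ℝ (Fin m)) := isometry_subtype_coe
    refine (Topology.IsEmbedding.isCompact_iff hiso.isEmbedding).2 ?_
    rw [hDimg v]
    exact (hKvc v).vadd _
  have hFconv : ∀ v : EuclideanSpace ℝ (Fin m), Convex ℝ (F v) := by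
    intro v
    exact (((hKvconv v)).vadd (-v)).linear_preimage S.subtype
  -- rewrite the goal in terms of the subspace measure
  rw [← hmeas_eq v₁, ← hmeas_eq v₂, ← hmeas_eq v₃]
  rcases eq_or_ne (μH[((finrank ℝ ↥S : ℕ) : ℝ)] (F v₁)) 0 with hz | hne1
  · rw [hz]
    simp only [ENNReal.toReal_zero]
    rw [Real.zero_rpow (by linarith : (0:ℝ) < 1 - t).ne']
    rw [zero_mul]
    exact ENNReal.toReal_nonneg
  rcases eq_or_ne (μH[((finrank ℝ ↥S : ℕ) : ℝ)] (F v₂)) 0 with hz | hne2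
  · rw [hz]
    simp only [ENNReal.toReal_zero]
    rw [Real.zero_rpow ht0.ne']
    rw [mul_zero]
    exact ENNReal.toReal_nonneg
  have hX₁ne : (F v₁).Nonempty := nonempty_of_measure_ne_zero hne1
  have hX₂ne : (F v₂).Nonempty := nonempty_of_measure_ne_zero hne2
  -- the key inclusion
  have hincl : (1-t) • (F v₁) + t • (F v₂) ⊆ F v₃ := by
    rintro z ⟨p, ⟨x, hx, rfl⟩, q, ⟨y, hy, rfl⟩, rfl⟩
    show ((((1-t) • x + t • y : ↥S) : EuclideanSpace ℝ (Fin m))) ∈ (-v₃) +ᵥ (K ∩ (v₃ +ᵥ (S : Set (EuclideanSpace ℝ (Fin m)))))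
    obtain ⟨a, ⟨haK, haS⟩, hax⟩ := hx
    obtain ⟨b, ⟨hbK, hbS⟩, hby⟩ := hy
    have hae : a = v₁ + (x : EuclideanSpace ℝ (Fin m)) := by rw [← hax]; show a = v₁ + (-v₁ + a); abel
    have hbe : b = v₂ + (y : EuclideanSpace ℝ (Fin m)) := by rw [← hby]; show b = v₂ + (-v₂ + b); abel
    have hK1 : v₁ + (x : EuclideanSpace ℝ (Fin m)) ∈ K := hae ▸ haK
    have hK2 : v₂ + (y : EuclideanSpace ℝ (Fin m)) ∈ K := hbe ▸ hbK
    have hco : ((((1-t) • x + t • y : ↥S) : EuclideanSpace ℝ (Fin m))) = (1-t) • (x : EuclideanSpace ℝ (Fin m)) + t • (y : EuclideanSpace ℝ (Fin m)) := by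
      push_cast; ring_nf
    have hcomb : (1-t) • (v₁ + (x: EuclideanSpace ℝ (Fin m))) + t • (v₂ + (y: EuclideanSpace ℝ (Fin m))) ∈ K :=
      hKconv hK1 hK2 (by linarith) ht0.le (by ring)
    have hveq : v₃ + ((1-t) • (x: EuclideanSpace ℝ (Fin m)) + t • (y: EuclideanSpace ℝ (Fin m)))
        = (1-t) • (v₁ + (x: EuclideanSpace ℝ (Fin m))) + t • (v₂ + (y: EuclideanSpace ℝ (Fin m))) := by
      rw [hv₃]; module
    refine ⟨v₃ + ((1-t) • (x: EuclideanSpace ℝ (Fin m)) + t • (y: EuclideanSpace ℝ (Fin m))), ⟨hveq ▸ hcomb, ?_⟩, ?_⟩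
    · exact ⟨(1-t) • (x: EuclideanSpace ℝ (Fin m)) + t • (y: EuclideanSpace ℝ (Fin m)),
        SetLike.mem_coe.2 (S.add_mem (S.smul_mem _ x.2) (S.smul_mem _ y.2)), rfl⟩
    · show -v₃ +ᵥ (v₃ + ((1-t) • (x: EuclideanSpace ℝ (Fin m)) + t • (y: EuclideanSpace ℝ (Fin m)))) = _
      rw [hco]
      show -v₃ + (v₃ + ((1-t) • (x: EuclideanSpace ℝ (Fin m)) + t • (y: EuclideanSpace ℝ (Fin m)))) = _
      abel
  have final := bm_general (μH[((finrank ℝ ↥S : ℕ) : ℝ)]) ht0 ht1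
    (hFc v₁) (hFconv v₁) hX₁ne (hFc v₂) (hFconv v₂) hX₂ne
  have hfin : μH[((finrank ℝ ↥S : ℕ) : ℝ)] (F v₃) ≠ ∞ := ((hFc v₃).measure_lt_top).ne
  rw [ENNReal.toReal_rpow, ENNReal.toReal_rpow, ← ENNReal.toReal_mul]
  exact ENNReal.toReal_mono hfin (le_trans final (measure_mono hincl))
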